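/- The derivatives of invariants commute in the shifted Poisson structure: let g be a finite-dimensional Lie algebra over ℂ, C ∈ g*, and let Φ, Ψ ∈ S(g) be elements of the Poisson center of S(g) (with the Lie–Poisson bracket). Then for all m, n ≥ 0 the elements ∂_C^m Φ and ∂_C^n Ψ Poisson-commute in S(g), where ∂_C denotes the constant-coefficient derivation of S(g) = ℂ[g*] in the direction C. -/

import Mathlib

open scoped BigOperators

section
variable {ι : Type} [Fintype ι] [DecidableEq ι]
variable {L : Type} [LieRing L] [LieAlgebra ℂ L]

/-- A vector `v ∈ g`, viewed as a linear polynomial in `S(g) = ℂ[g*]`, written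
in the coordinates given by a basis `b` of `g`. -/
noncomputable def linPoly (b : Module.Basis ι ℂ L) (v : L) : MvPolynomial ι ℂ :=
  ∑ k, b.repr v k • MvPolynomial.X k

/-- The Lie–Poisson bracket on `S(g) = ℂ[g*]`, in the coordinates given by a basis
`b` of `g`: `{f, g} = Σ_{i,j} [b_i, b_j] · (∂f/∂x_i)(∂g/∂x_j)`. It is the unique
Poisson bracket with `{x, y} = [x, y]` for `x, y ∈ g`. -/
noncomputable def lpBracket (b : Module.Basis ι ℂ L) (f g : MvPolynomial ι ℂ) : MvPolynomial ι ℂ :=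
  ∑ i, ∑ j, linPoly b ⁅b i, b j⁆ * MvPolynomial.pderiv i f * MvPolynomial.pderiv j g

/-- The constant-coefficient derivation `∂_C` of `S(g) = ℂ[g*]` in the direction of
`C ∈ g*`: it sends `x ∈ g` to the constant `C(x)`. -/
noncomputable def dirDeriv (b : Module.Basis ι ℂ L) (C : Module.Dual ℂ L) (f : MvPolynomial ι ℂ) :
    MvPolynomial ι ℂ :=
  ∑ i, C (b i) • MvPolynomial.pderiv i f


open MvPolynomial

set_option linter.unusedSectionVars false
set_option linter.unnecessarySeqFocus false

noncomputable def fz (b : Module.Basis ι ℂ L) (C : Module.Dual ℂ L) (f g : MvPolynomial ι ℂ) :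
    MvPolynomial ι ℂ :=
  ∑ i, ∑ j, C ⁅b i, b j⁆ • (MvPolynomial.pderiv i f * MvPolynomial.pderiv j g)

lemma pderiv_pderiv (i j : ι) (p : MvPolynomial ι ℂ) :
    pderiv i (pderiv j p) = pderiv j (pderiv i p) := by
  induction p using MvPolynomial.induction_on with
  | C a => simp
  | add p q hp hq => simp [hp, hq]
  | mul_X p k hp =>
    simp only [pderiv_mul, map_add, pderiv_X, hp, Pi.single_apply]
    split_ifs <;> simp <;> ring

lemma dirDeriv_zero (b : Module.Basis ι ℂ L) (C : Module.Dual ℂ L) : dirDeriv b C 0 = 0 := by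
  simp [dirDeriv]

lemma dirDeriv_smul (b : Module.Basis ι ℂ L) (C : Module.Dual ℂ L) (c : ℂ) (f : MvPolynomial ι ℂ) :
    dirDeriv b C (c • f) = c • dirDeriv b C f := by
  simp [dirDeriv, Finset.smul_sum, smul_comm c]

lemma dirDeriv_neg (b : Module.Basis ι ℂ L) (C : Module.Dual ℂ L) (f : MvPolynomial ι ℂ) :
    dirDeriv b C (-f) = -dirDeriv b C f := by
  simp [dirDeriv, Finset.sum_neg_distrib]

lemma dirDeriv_sum (b : Module.Basis ι ℂ L) (C : Module.Dual ℂ L) {α : Type*} (s : Finset α)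
    (h : α → MvPolynomial ι ℂ) :
    dirDeriv b C (∑ x ∈ s, h x) = ∑ x ∈ s, dirDeriv b C (h x) := by
  simp only [dirDeriv, map_sum, Finset.smul_sum]
  exact Finset.sum_comm

lemma dirDeriv_mul (b : Module.Basis ι ℂ L) (C : Module.Dual ℂ L) (f g : MvPolynomial ι ℂ) :
    dirDeriv b C (f * g) = dirDeriv b C f * g + f * dirDeriv b C g := by
  simp only [dirDeriv, pderiv_mul, smul_add, Finset.sum_add_distrib, Finset.sum_mul,
    Finset.mul_sum, smul_mul_assoc, mul_smul_comm]

lemma dirDeriv_pderiv (b : Module.Basis ι ℂ L) (C : Module.Dual ℂ L) (j : ι) (f : MvPolynomial ι ℂ) :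
    dirDeriv b C (pderiv j f) = pderiv j (dirDeriv b C f) := by
  simp only [dirDeriv, map_sum]
  exact Finset.sum_congr rfl fun i _ => by rw [Derivation.map_smul, pderiv_pderiv]

lemma pderiv_linPoly (b : Module.Basis ι ℂ L) (i : ι) (v : L) :
    pderiv i (linPoly b v) = MvPolynomial.C (b.repr v i) := by
  simp [linPoly, map_sum, Pi.single_apply, Finset.sum_ite_eq', smul_eq_C_mul]

lemma dirDeriv_linPoly (b : Module.Basis ι ℂ L) (C : Module.Dual ℂ L) (v : L) :
    dirDeriv b C (linPoly b v) = MvPolynomial.C (C v) := by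
  have hv : C v = ∑ i, b.repr v i * C (b i) := by
    conv_lhs => rw [← b.sum_repr v]
    simp only [map_sum, map_smul, smul_eq_mul]
  simp [dirDeriv, pderiv_linPoly, hv, map_sum, smul_eq_C_mul, mul_comm]

lemma linPoly_neg (b : Module.Basis ι ℂ L) (v : L) : linPoly b (-v) = -linPoly b v := by
  simp [linPoly, Finset.sum_neg_distrib]

lemma lpBracket_antisymm (b : Module.Basis ι ℂ L) (f g : MvPolynomial ι ℂ) :
    lpBracket b g f = -lpBracket b f g := by
  unfold lpBracket
  rw [Finset.sum_comm, ← Finset.sum_neg_distrib]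
  refine Finset.sum_congr rfl fun i _ => ?_
  rw [← Finset.sum_neg_distrib]
  refine Finset.sum_congr rfl fun j _ => ?_
  rw [← lie_skew (b i) (b j), linPoly_neg]
  ring

lemma fz_antisymm (b : Module.Basis ι ℂ L) (C : Module.Dual ℂ L) (f g : MvPolynomial ι ℂ) :
    fz b C g f = -fz b C f g := by
  unfold fz
  rw [Finset.sum_comm, ← Finset.sum_neg_distrib]
  refine Finset.sum_congr rfl fun i _ => ?_
  rw [← Finset.sum_neg_distrib]
  refine Finset.sum_congr rfl fun j _ => ?_
  rw [← lie_skew (b i) (b j), map_neg, neg_smul, mul_comm ((pderiv j) g), neg_neg]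

lemma dirDeriv_lpBracket (b : Module.Basis ι ℂ L) (C : Module.Dual ℂ L) (f g : MvPolynomial ι ℂ) :
    dirDeriv b C (lpBracket b f g)
      = lpBracket b (dirDeriv b C f) g + lpBracket b f (dirDeriv b C g) + fz b C f g := by
  unfold lpBracket fz
  rw [dirDeriv_sum, ← Finset.sum_add_distrib, ← Finset.sum_add_distrib]
  refine Finset.sum_congr rfl fun i _ => ?_
  rw [dirDeriv_sum, ← Finset.sum_add_distrib, ← Finset.sum_add_distrib]
  refine Finset.sum_congr rfl fun j _ => ?_
  rw [dirDeriv_mul, dirDeriv_mul, dirDeriv_linPoly, dirDeriv_pderiv, dirDeriv_pderiv,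
      smul_eq_C_mul]
  ring

lemma dirDeriv_fz (b : Module.Basis ι ℂ L) (C : Module.Dual ℂ L) (f g : MvPolynomial ι ℂ) :
    dirDeriv b C (fz b C f g) = fz b C (dirDeriv b C f) g + fz b C f (dirDeriv b C g) := by
  unfold fz
  rw [dirDeriv_sum, ← Finset.sum_add_distrib]
  refine Finset.sum_congr rfl fun i _ => ?_
  rw [dirDeriv_sum, ← Finset.sum_add_distrib]
  refine Finset.sum_congr rfl fun j _ => ?_
  rw [dirDeriv_smul, dirDeriv_mul, dirDeriv_pderiv, dirDeriv_pderiv, smul_add]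


lemma bracket_iter (b : Module.Basis ι ℂ L) (C : Module.Dual ℂ L) (Φ : MvPolynomial ι ℂ)
    (hΦ : ∀ f, lpBracket b Φ f = 0) :
    ∀ m f, lpBracket b ((dirDeriv b C)^[m + 1] Φ) f
      = -((((m + 1 : ℕ)) : ℂ) • fz b C ((dirDeriv b C)^[m] Φ) f) := by
  intro m
  induction m with
  | zero =>
    intro f
    have h := congrArg (dirDeriv b C) (hΦ f)
    rw [dirDeriv_zero, dirDeriv_lpBracket, hΦ (dirDeriv b C f), add_zero] at h
    simp only [Function.iterate_one, Function.iterate_zero_apply, Nat.cast_one, one_smul,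
      Nat.zero_add]
    exact eq_neg_of_add_eq_zero_left h
  | succ k ih =>
    intro f
    have h := congrArg (dirDeriv b C) (ih f)
    rw [dirDeriv_lpBracket, dirDeriv_neg, dirDeriv_smul, dirDeriv_fz,
        ih (dirDeriv b C f)] at h
    simp only [← Function.iterate_succ_apply'] at h
    set A := lpBracket b ((dirDeriv b C)^[k + 1 + 1] Φ) f with hA
    set E := fz b C ((dirDeriv b C)^[k + 1] Φ) f with hE
    set F := fz b C ((dirDeriv b C)^[k] Φ) (dirDeriv b C f) with hF
    set c : ℂ := ((k + 1 : ℕ) : ℂ) with hc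
    have hc2 : ((k + 1 + 1 : ℕ) : ℂ) = c + 1 := by rw [hc]; push_cast; ring
    rw [hc2, add_smul, one_smul]
    have hAeq : A = -(c • (E + F)) + c • F - E := by rw [← h]; abel
    rw [hAeq, smul_add]
    abel


/-- if `Φ` and `Ψ` are in the Poisson center of `S(g)` then all the
directional derivatives `∂_C^m Φ` and `∂_C^n Ψ` Poisson-commute. -/
theorem derivatives_of_invariants_poisson_commute (b : Module.Basis ι ℂ L)
    (C : Module.Dual ℂ L) (Φ Ψ : MvPolynomial ι ℂ)
    (hΦ : ∀ f, lpBracket b Φ f = 0) (hΨ : ∀ f, lpBracket b Ψ f = 0)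
    (m n : ℕ) :
    lpBracket b ((dirDeriv b C)^[m] Φ) ((dirDeriv b C)^[n] Ψ) = 0 := by
  induction m generalizing n with
  | zero => simpa using hΦ ((dirDeriv b C)^[n] Ψ)
  | succ k ih =>
    have h3 : lpBracket b ((dirDeriv b C)^[n + 1] Ψ) ((dirDeriv b C)^[k] Φ) = 0 := by
      rw [lpBracket_antisymm, ih (n + 1), neg_zero]
    have h2 := bracket_iter b C Ψ hΨ n ((dirDeriv b C)^[k] Φ)
    rw [h3] at h2
    have hne : (((n + 1 : ℕ)) : ℂ) ≠ 0 := Nat.cast_ne_zero.mpr (Nat.succ_ne_zero n)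
    have h4 : fz b C ((dirDeriv b C)^[n] Ψ) ((dirDeriv b C)^[k] Φ) = 0 := by
      have h5 := neg_eq_zero.mp h2.symm
      rcases smul_eq_zero.mp h5 with h | h
      · exact absurd h hne
      · exact h
    rw [bracket_iter b C Φ hΦ k, fz_antisymm, h4]
    simp

end
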